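/- Let α > 0 and δ ∈ ℝ with |δ| ≤ 2, and let p : (0,∞) → ℝ be differentiable with p'(ρ) = α·ρ^δ for all ρ > 0. Then for every pair of sub-sonic states (ρ_l, q_l) and (ρ_r, q_r) there exists a unique ρ > 0 with L_l(ρ; ρ_l, q_l) = L_r(ρ; ρ_r, q_r). -/

import Mathlib

open Filter Topology Set MeasureTheory intervalIntegral

/-- A state `(ρ₀, q₀)` is sub-sonic for the pressure law with derivative `p'`
if `ρ₀ > 0` and `|q₀/ρ₀| < c(ρ₀) = √(p'(ρ₀))`. -/
def SubSonic (p' : ℝ → ℝ) (ρ₀ q₀ : ℝ) : Prop :=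
  0 < ρ₀ ∧ |q₀ / ρ₀| < Real.sqrt (p' ρ₀)

/-- The 1-Lax curve through the left state `(ρl, ql)`, for pressure law `p`
with derivative `p'` (acoustic speed `c = √p'`):
rarefaction part for `ρ ≤ ρl`, shock part for `ρ ≥ ρl`, where
`f(ρ, ρl) = (ρ/ρl)(ρ − ρl)(p(ρ) − p(ρl))`. -/
noncomputable def laxL (p p' : ℝ → ℝ) (ρl ql ρ : ℝ) : ℝ :=
  if ρ ≤ ρl then ρ * (ql / ρl + ∫ s in ρ..ρl, Real.sqrt (p' s) / s)
  else ρ * (ql / ρl) - Real.sqrt (ρ / ρl * (ρ - ρl) * (p ρ - p ρl))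

/-- The 2-Lax curve through the right state `(ρr, qr)`. -/
noncomputable def laxR (p p' : ℝ → ℝ) (ρr qr ρ : ℝ) : ℝ :=
  if ρ ≤ ρr then ρ * (qr / ρr - ∫ s in ρ..ρr, Real.sqrt (p' s) / s)
  else ρ * (qr / ρr) + Real.sqrt (ρ / ρr * (ρ - ρr) * (p ρ - p ρr))

lemma sqrtAux {A t : ℝ} (hA : 0 ≤ A) (ht : 0 ≤ t) :
    Real.sqrt (A * t ^ 2) = Real.sqrt A * t := by
  rw [Real.sqrt_mul hA, Real.sqrt_sq ht]

noncomputable def dSlope (α δ : ℝ) (p : ℝ → ℝ) (ρ₀ q₀ ρ : ℝ) : ℝ :=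
  if ρ ≤ ρ₀ then q₀ / ρ₀ + ∫ s in ρ..ρ₀, Real.sqrt (α * s ^ δ) / s
  else q₀ / ρ₀ - Real.sqrt ((ρ - ρ₀) * (p ρ - p ρ₀) / (ρ * ρ₀))

section aux

variable {α δ : ℝ} (hα : 0 < α)

lemma cont_integrand : ContinuousOn (fun s : ℝ => Real.sqrt (α * s ^ δ) / s) (Ioi 0) := by
  intro s hs
  have h1 : ContinuousAt (fun s : ℝ => Real.sqrt (α * s ^ δ) / s) s := by
    have : ContinuousAt (fun s : ℝ => s ^ δ) s :=
      Real.continuousAt_rpow_const s δ (Or.inl (ne_of_gt hs))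
    exact ((Real.continuous_sqrt.continuousAt.comp
      (continuousAt_const.mul this)).div continuousAt_id (ne_of_gt hs))
  exact h1.continuousWithinAt

lemma cont_integrand' : ContinuousOn (fun s : ℝ => α * s ^ δ) (Ioi 0) := by
  intro s hs
  exact (continuousAt_const.mul
    (Real.continuousAt_rpow_const s δ (Or.inl (ne_of_gt hs)))).continuousWithinAt

end aux

section withp

variable {α δ : ℝ} {p : ℝ → ℝ}
variable (hα : 0 < α) (hp : ∀ ρ > (0 : ℝ), HasDerivAt p (α * ρ ^ δ) ρ)

include hp in
lemma p_contOn : ContinuousOn p (Ioi 0) :=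
  fun x hx => ((hp x hx).continuousAt).continuousWithinAt

include hα hp in
lemma p_strictMono : StrictMonoOn p (Ioi 0) := by
  apply strictMonoOn_of_deriv_pos (convex_Ioi 0) (p_contOn hp)
  intro x hx
  rw [interior_Ioi] at hx
  have hx' : (0:ℝ) < x := hx
  rw [(hp x hx').deriv]
  positivity

variable {ρ₀ q₀ : ℝ} (h0 : 0 < ρ₀)

lemma laxL_eq_dSlope {ρ : ℝ} (hρ : 0 < ρ) :
    laxL p (fun s => α * s ^ δ) ρ₀ q₀ ρ = ρ * dSlope α δ p ρ₀ q₀ ρ := by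
  unfold laxL dSlope
  by_cases h : ρ ≤ ρ₀
  · simp [h]
  · rw [if_neg h, if_neg h]
    have key : ρ / ρ₀ * (ρ - ρ₀) * (p ρ - p ρ₀)
        = ρ ^ 2 * ((ρ - ρ₀) * (p ρ - p ρ₀) / (ρ * ρ₀)) := by
      have hρ0 : ρ ≠ 0 := ne_of_gt hρ
      by_cases h0' : ρ₀ = 0
      · subst h0'
        simp
      · field_simp
    rw [key, Real.sqrt_mul (sq_nonneg ρ), Real.sqrt_sq hρ.le]
    ring

lemma laxR_eq_neg_laxL (ρr qr ρ : ℝ) :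
    laxR p (fun s => α * s ^ δ) ρr qr ρ = -(laxL p (fun s => α * s ^ δ) ρr (-qr) ρ) := by
  unfold laxL laxR
  split_ifs with h
  · ring
  · ring

include hα h0 hp in
lemma dSlope_strictAnti : StrictAntiOn (dSlope α δ p ρ₀ q₀) (Ioi 0) := by
  have hpm := p_strictMono hα hp
  intro x hx y hy hxy
  simp only [mem_Ioi] at hx hy
  have hint : ∀ u v : ℝ, 0 < u → 0 < v →
      IntervalIntegrable (fun s : ℝ => Real.sqrt (α * s ^ δ) / s) volume u v := by
    intro u v hu hv
    apply ContinuousOn.intervalIntegrable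
    apply (cont_integrand (α := α) (δ := δ)).mono
    intro s hs
    exact lt_of_lt_of_le (lt_min hu hv) hs.1
  have sqpos : ∀ z : ℝ, ρ₀ < z → 0 < Real.sqrt ((z - ρ₀) * (p z - p ρ₀) / (z * ρ₀)) := by
    intro z hz
    apply Real.sqrt_pos.2
    have hpz : (0:ℝ) < p z - p ρ₀ := sub_pos.2 (hpm h0 (h0.trans hz) hz)
    have hz0 : (0:ℝ) < z := h0.trans hz
    exact div_pos (mul_pos (sub_pos.2 hz) hpz) (mul_pos hz0 h0)
  unfold dSlope
  by_cases hyl : y ≤ ρ₀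
  · have hxl : x ≤ ρ₀ := le_of_lt (hxy.trans_le hyl)
    rw [if_pos hxl, if_pos hyl]
    have hsplit : (∫ s in x..y, Real.sqrt (α * s ^ δ) / s)
        + (∫ s in y..ρ₀, Real.sqrt (α * s ^ δ) / s)
        = ∫ s in x..ρ₀, Real.sqrt (α * s ^ δ) / s :=
      intervalIntegral.integral_add_adjacent_intervals (hint _ _ hx hy) (hint _ _ hy h0)
    have hpos : 0 < ∫ s in x..y, Real.sqrt (α * s ^ δ) / s := by
      apply intervalIntegral.intervalIntegral_pos_of_pos_on (hint _ _ hx hy)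
      · intro s hs
        have hs0 : 0 < s := hx.trans hs.1
        have : 0 < α * s ^ δ := by positivity
        positivity
      · exact hxy
    linarith
  · push_neg at hyl
    rw [if_neg (not_le.2 hyl)]
    by_cases hxl : x ≤ ρ₀
    · rw [if_pos hxl]
      have h1 : 0 ≤ ∫ s in x..ρ₀, Real.sqrt (α * s ^ δ) / s := by
        apply intervalIntegral.integral_nonneg hxl
        intro u hu
        have hu0 : 0 < u := lt_of_lt_of_le hx hu.1
        positivity
      have := sqpos y hyl
      linarith
    · push_neg at hxl
      rw [if_neg (not_le.2 hxl)]
      have hpx : (0:ℝ) < p x - p ρ₀ := sub_pos.2 (hpm h0 (h0.trans hxl) hxl)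
      have hpy : (0:ℝ) < p y - p x :=
        sub_pos.2 (hpm (h0.trans hxl) (h0.trans (hxl.trans hxy)) hxy)
      have hkey : (x - ρ₀) * (p x - p ρ₀) / (x * ρ₀) < (y - ρ₀) * (p y - p ρ₀) / (y * ρ₀) := by
        rw [div_lt_div_iff₀ (by positivity) (by positivity)]
        nlinarith [mul_pos (sub_pos.2 hxl) hpx, mul_pos hx hy,
          mul_pos (sub_pos.2 hxy) hpx, mul_pos h0 (sub_pos.2 hxy),
          mul_pos (mul_pos h0 (sub_pos.2 hxy)) hpx,
          mul_pos (mul_pos hx h0) hpy,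
          mul_pos (mul_pos hx (sub_pos.2 hxl)) hpy]
      have h2 : 0 ≤ (x - ρ₀) * (p x - p ρ₀) / (x * ρ₀) :=
        le_of_lt (div_pos (mul_pos (sub_pos.2 hxl) hpx) (mul_pos hx h0))
      have := Real.sqrt_lt_sqrt h2 hkey
      linarith

include hp h0 in
lemma dSlope_contOn : ContinuousOn (dSlope α δ p ρ₀ q₀) (Ioi 0) := by
  have hA : ContinuousOn (fun ρ : ℝ => q₀ / ρ₀ + ∫ s in ρ..ρ₀, Real.sqrt (α * s ^ δ) / s)
      (Ioi 0) := by
    have heq : (fun ρ : ℝ => q₀ / ρ₀ + ∫ s in ρ..ρ₀, Real.sqrt (α * s ^ δ) / s)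
        = (fun ρ : ℝ => q₀ / ρ₀ - ∫ s in ρ₀..ρ, Real.sqrt (α * s ^ δ) / s) := by
      funext ρ
      rw [intervalIntegral.integral_symm]
      ring
    rw [heq]
    intro x hx
    have hint : IntervalIntegrable (fun s : ℝ => Real.sqrt (α * s ^ δ) / s) volume ρ₀ x := by
      apply ContinuousOn.intervalIntegrable
      apply (cont_integrand (α := α) (δ := δ)).mono
      intro s hs
      exact lt_of_lt_of_le (lt_min h0 hx) hs.1
    have hd := intervalIntegral.integral_hasDerivAt_right hint
      ((cont_integrand (α := α) (δ := δ)).stronglyMeasurableAtFilter isOpen_Ioi x hx)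
      ((cont_integrand (α := α) (δ := δ)).continuousAt (isOpen_Ioi.mem_nhds hx))
    exact ((continuousAt_const.sub hd.continuousAt)).continuousWithinAt
  have hB : ContinuousOn (fun ρ : ℝ => q₀ / ρ₀ - Real.sqrt ((ρ - ρ₀) * (p ρ - p ρ₀) / (ρ * ρ₀)))
      (Ioi 0) := by
    apply continuousOn_const.sub
    apply Real.continuous_sqrt.comp_continuousOn
    apply ContinuousOn.div
    · exact ((continuousOn_id.sub continuousOn_const).mul
        ((p_contOn hp).sub continuousOn_const))
    · exact continuousOn_id.mul continuousOn_const
    · intro x hx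
      have hx' : (0:ℝ) < x := hx
      exact ne_of_gt (mul_pos hx' h0)
  unfold dSlope
  apply ContinuousOn.if
  · intro a ha
    have hfr : a ∈ frontier {a : ℝ | a ≤ ρ₀} := ha.2
    have hfr' : frontier {a : ℝ | a ≤ ρ₀} = {ρ₀} := by
      have hIic : {a : ℝ | a ≤ ρ₀} = Iic ρ₀ := rfl
      rw [hIic, frontier_Iic]
    rw [hfr', mem_singleton_iff] at hfr
    subst hfr
    simp [intervalIntegral.integral_same]
  · exact hA.mono inter_subset_left
  · exact hB.mono inter_subset_left

include hα h0 in
lemma dSlope_lower (hδ2 : δ ≤ 2) {a : ℝ} (ha : 0 < a) (ha' : a ≤ ρ₀) :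
    q₀ / ρ₀ + Real.sqrt (α * ρ₀ ^ δ) * (1 - a / ρ₀) ≤ dSlope α δ p ρ₀ q₀ a := by
  unfold dSlope
  rw [if_pos ha']
  have hconst : Real.sqrt (α * ρ₀ ^ δ) * (1 - a / ρ₀)
      = ∫ _ in a..ρ₀, Real.sqrt (α * ρ₀ ^ δ) / ρ₀ := by
    rw [intervalIntegral.integral_const, smul_eq_mul]
    field_simp
  rw [hconst]
  have hmono : (∫ _ in a..ρ₀, Real.sqrt (α * ρ₀ ^ δ) / ρ₀)
      ≤ ∫ s in a..ρ₀, Real.sqrt (α * s ^ δ) / s := by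
    apply intervalIntegral.integral_mono_on ha'
    · exact intervalIntegrable_const
    · apply ContinuousOn.intervalIntegrable
      apply (cont_integrand (α := α) (δ := δ)).mono
      intro s hs
      rw [uIcc_of_le ha'] at hs
      exact lt_of_lt_of_le ha hs.1
    · intro s hs
      have hs0 : 0 < s := lt_of_lt_of_le ha hs.1
      rw [div_le_div_iff₀ h0 hs0]
      rw [← sqrtAux (by positivity : (0:ℝ) ≤ α * ρ₀ ^ δ) hs0.le,
        ← sqrtAux (by positivity : (0:ℝ) ≤ α * s ^ δ) h0.le]
      apply Real.sqrt_le_sqrt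
      have hexp : ρ₀ ^ (δ - 2) ≤ s ^ (δ - 2) :=
        Real.rpow_le_rpow_of_nonpos hs0 hs.2 (by linarith)
      have hsd : s ^ δ = s ^ (δ - 2) * s ^ 2 := by
        rw [← Real.rpow_natCast s 2, ← Real.rpow_add hs0]
        norm_num
      have hrd : ρ₀ ^ δ = ρ₀ ^ (δ - 2) * ρ₀ ^ 2 := by
        rw [← Real.rpow_natCast ρ₀ 2, ← Real.rpow_add h0]
        norm_num
      rw [hsd, hrd]
      have h3 : ρ₀ ^ (δ - 2) * (s ^ 2 * ρ₀ ^ 2) ≤ s ^ (δ - 2) * (s ^ 2 * ρ₀ ^ 2) :=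
        mul_le_mul_of_nonneg_right hexp (by positivity)
      nlinarith [h3, hα]
  linarith

include hα hp h0 in
lemma dSlope_upper (hδ2 : -2 ≤ δ) {b : ℝ} (hb : ρ₀ ≤ b) :
    dSlope α δ p ρ₀ q₀ b ≤ q₀ / ρ₀ - Real.sqrt (α * ρ₀ ^ δ) * (1 - ρ₀ / b) := by
  rcases eq_or_lt_of_le hb with heq | hlt
  · unfold dSlope
    rw [← heq, if_pos le_rfl, intervalIntegral.integral_same]
    rw [div_self (ne_of_gt h0)]
    simp
  · have hb0 : 0 < b := h0.trans hlt
    unfold dSlope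
    rw [if_neg (not_le.2 hlt)]
    have key : Real.sqrt (α * ρ₀ ^ δ) * (1 - ρ₀ / b)
        ≤ Real.sqrt ((b - ρ₀) * (p b - p ρ₀) / (b * ρ₀)) := by
      have ht : (0:ℝ) ≤ 1 - ρ₀ / b := by
        have : ρ₀ / b ≤ 1 := by rw [div_le_one hb0]; exact hb
        linarith
      rw [← sqrtAux (by positivity : (0:ℝ) ≤ α * ρ₀ ^ δ) ht]
      apply Real.sqrt_le_sqrt
      have hftc : (∫ s in ρ₀..b, α * s ^ δ) = p b - p ρ₀ := by
        apply intervalIntegral.integral_eq_sub_of_hasDerivAt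
        · intro x hx
          rw [uIcc_of_le hb] at hx
          exact hp x (lt_of_lt_of_le h0 hx.1)
        · apply ContinuousOn.intervalIntegrable
          apply (cont_integrand' (α := α) (δ := δ)).mono
          intro s hs
          rw [uIcc_of_le hb] at hs
          exact lt_of_lt_of_le h0 hs.1
      have hinv : (∫ s in ρ₀..b, α * ρ₀ ^ (δ + 2) * (s ^ 2)⁻¹)
          = α * ρ₀ ^ (δ + 2) * (ρ₀⁻¹ - b⁻¹) := by
        rw [intervalIntegral.integral_const_mul]
        have hF : ∀ x ∈ uIcc ρ₀ b, HasDerivAt (fun y : ℝ => -y⁻¹) ((x ^ 2)⁻¹) x := by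
          intro x hx
          rw [uIcc_of_le hb] at hx
          have hx0 : x ≠ 0 := ne_of_gt (lt_of_lt_of_le h0 hx.1)
          have := (hasDerivAt_inv hx0).neg
          rw [neg_neg] at this; exact this
        rw [intervalIntegral.integral_eq_sub_of_hasDerivAt hF]
        · ring
        · apply ContinuousOn.intervalIntegrable
          apply ContinuousOn.inv₀ (continuousOn_id.pow 2)
          intro x hx
          rw [uIcc_of_le hb] at hx
          have hx' : (0:ℝ) < x := lt_of_lt_of_le h0 hx.1
          exact pow_ne_zero 2 hx'.ne'
      have hmono : (∫ s in ρ₀..b, α * ρ₀ ^ (δ + 2) * (s ^ 2)⁻¹) ≤ ∫ s in ρ₀..b, α * s ^ δ := by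
        apply intervalIntegral.integral_mono_on hb
        · apply ContinuousOn.intervalIntegrable
          apply ContinuousOn.mul continuousOn_const
          apply ContinuousOn.inv₀ (continuousOn_id.pow 2)
          intro x hx
          rw [uIcc_of_le hb] at hx
          have hx' : (0:ℝ) < x := lt_of_lt_of_le h0 hx.1
          exact pow_ne_zero 2 hx'.ne'
        · apply ContinuousOn.intervalIntegrable
          apply (cont_integrand' (α := α) (δ := δ)).mono
          intro s hs
          rw [uIcc_of_le hb] at hs
          exact lt_of_lt_of_le h0 hs.1
        · intro s hs
          have hs0 : 0 < s := lt_of_lt_of_le h0 hs.1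
          have hrw : s ^ δ = s ^ (δ + 2) * (s ^ 2)⁻¹ := by
            rw [← Real.rpow_natCast s 2, ← Real.rpow_neg hs0.le, ← Real.rpow_add hs0]
            norm_num
          rw [hrw, ← mul_assoc]
          apply mul_le_mul_of_nonneg_right _ (by positivity)
          apply mul_le_mul_of_nonneg_left _ hα.le
          exact Real.rpow_le_rpow h0.le hs.1 (by linarith)
      have hΔ : α * ρ₀ ^ (δ + 2) * (ρ₀⁻¹ - b⁻¹) ≤ p b - p ρ₀ := by
        rw [← hftc, ← hinv]; exact hmono
      have hfac : (b - ρ₀) * (α * ρ₀ ^ (δ + 2) * (ρ₀⁻¹ - b⁻¹)) / (b * ρ₀)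
          = α * ρ₀ ^ δ * (1 - ρ₀ / b) ^ 2 := by
        have hrd : ρ₀ ^ (δ + 2) = ρ₀ ^ δ * ρ₀ ^ 2 := by
          rw [← Real.rpow_natCast ρ₀ 2, ← Real.rpow_add h0]
          norm_num
        rw [hrd]
        field_simp
      calc α * ρ₀ ^ δ * (1 - ρ₀ / b) ^ 2
          = (b - ρ₀) * (α * ρ₀ ^ (δ + 2) * (ρ₀⁻¹ - b⁻¹)) / (b * ρ₀) := hfac.symm
        _ ≤ (b - ρ₀) * (p b - p ρ₀) / (b * ρ₀) := by
            apply div_le_div_of_nonneg_right ?_ (by positivity)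
            · exact mul_le_mul_of_nonneg_left hΔ (by linarith)
    linarith

end withp

/-- For a generalized γ-law pressure with `p'(ρ) = α ρ^δ`,
`α > 0`, `|δ| ≤ 2`, the Lax curves through any sub-sonic states intersect
in a unique point `ρ > 0`. -/
theorem stmt5 (α δ : ℝ) (hα : 0 < α) (hδ : |δ| ≤ 2) (p : ℝ → ℝ)
    (hp : ∀ ρ > (0 : ℝ), HasDerivAt p (α * ρ ^ δ) ρ)
    (ρl ql ρr qr : ℝ)
    (hl : SubSonic (fun ρ => α * ρ ^ δ) ρl ql)
    (hr : SubSonic (fun ρ => α * ρ ^ δ) ρr qr) :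
    ∃! ρ : ℝ, 0 < ρ ∧
      laxL p (fun s => α * s ^ δ) ρl ql ρ =
        laxR p (fun s => α * s ^ δ) ρr qr ρ := by
  obtain ⟨hρl, hql⟩ := hl
  obtain ⟨hρr, hqr⟩ := hr
  have hδ1 : δ ≤ 2 := (abs_le.mp hδ).2
  have hδ2 : -2 ≤ δ := (abs_le.mp hδ).1
  obtain ⟨cl, hcl_def⟩ : ∃ c : ℝ, c = Real.sqrt (α * ρl ^ δ) := ⟨_, rfl⟩
  obtain ⟨cr, hcr_def⟩ : ∃ c : ℝ, c = Real.sqrt (α * ρr ^ δ) := ⟨_, rfl⟩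
  have hcl : 0 < cl := by rw [hcl_def]; exact Real.sqrt_pos.2 (by positivity)
  have hcr : 0 < cr := by rw [hcr_def]; exact Real.sqrt_pos.2 (by positivity)
  have hql' : -cl < ql / ρl ∧ ql / ρl < cl := by
    rw [hcl_def]; exact abs_lt.mp hql
  have hqr' : -cr < qr / ρr ∧ qr / ρr < cr := by
    rw [hcr_def]; exact abs_lt.mp hqr
  obtain ⟨D, hD⟩ : ∃ D : ℝ → ℝ,
      D = fun x => dSlope α δ p ρl ql x + dSlope α δ p ρr (-qr) x := ⟨_, rfl⟩
  have hDx : ∀ x : ℝ, D x = dSlope α δ p ρl ql x + dSlope α δ p ρr (-qr) x := by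
    intro x; rw [hD]
  have hanti1 := dSlope_strictAnti (p := p) (q₀ := ql) hα hp hρl
  have hanti2 := dSlope_strictAnti (p := p) (q₀ := -qr) hα hp hρr
  have hDanti : StrictAntiOn D (Ioi 0) := by
    intro x hx y hy hxy
    rw [hDx x, hDx y]
    exact add_lt_add (hanti1 hx hy hxy) (hanti2 hx hy hxy)
  have hDcont : ContinuousOn D (Ioi 0) := by
    rw [hD]
    exact (dSlope_contOn (q₀ := ql) hp hρl).add (dSlope_contOn (q₀ := -qr) hp hρr)
  -- the point a near 0 where D > 0
  obtain ⟨ε₁, hε₁_def⟩ : ∃ e : ℝ, e = (ql / ρl + cl) + (-(qr / ρr) + cr) := ⟨_, rfl⟩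
  have hε₁ : 0 < ε₁ := by rw [hε₁_def]; linarith [hql'.1, hqr'.2]
  obtain ⟨K₁, hK₁_def⟩ : ∃ k : ℝ, k = cl / ρl + cr / ρr := ⟨_, rfl⟩
  have hK₁ : 0 < K₁ := by rw [hK₁_def]; positivity
  obtain ⟨a, ha_def⟩ : ∃ a : ℝ, a = min (min ρl ρr) (ε₁ / (2 * K₁)) := ⟨_, rfl⟩
  have ha0 : 0 < a := by rw [ha_def]; exact lt_min (lt_min hρl hρr) (by positivity)
  have haρl : a ≤ ρl := by rw [ha_def]; exact le_trans (min_le_left _ _) (min_le_left _ _)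
  have haρr : a ≤ ρr := by rw [ha_def]; exact le_trans (min_le_left _ _) (min_le_right _ _)
  have haK : a ≤ ε₁ / (2 * K₁) := by rw [ha_def]; exact min_le_right _ _
  have hDa : 0 < D a := by
    have h1 : ql / ρl + cl * (1 - a / ρl) ≤ dSlope α δ p ρl ql a := by
      rw [hcl_def]; exact dSlope_lower (p := p) (q₀ := ql) hα hρl hδ1 ha0 haρl
    have h2 : -(qr / ρr) + cr * (1 - a / ρr) ≤ dSlope α δ p ρr (-qr) a := by
      have := dSlope_lower (p := p) (q₀ := -qr) hα hρr hδ1 ha0 haρr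
      rw [hcr_def]
      have e3 : -qr / ρr = -(qr / ρr) := by ring
      linarith [e3 ▸ this]
    have e1 : cl * (1 - a / ρl) = cl - cl / ρl * a := by ring
    have e2 : cr * (1 - a / ρr) = cr - cr / ρr * a := by ring
    have hdist : cl / ρl * a + cr / ρr * a = K₁ * a := by rw [hK₁_def]; ring
    have hKa : K₁ * a ≤ ε₁ / 2 := by
      have h5 := mul_le_mul_of_nonneg_left haK hK₁.le
      have h6 : K₁ * (ε₁ / (2 * K₁)) = ε₁ / 2 := by
        field_simp
      linarith
    rw [hDx a]
    rw [e1] at h1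
    rw [e2] at h2
    linarith [h1, h2, hdist, hKa, hε₁, hε₁_def]
  -- the point b far out where D < 0
  obtain ⟨ε₂, hε₂_def⟩ : ∃ e : ℝ, e = (cl - ql / ρl) + (cr + qr / ρr) := ⟨_, rfl⟩
  have hε₂ : 0 < ε₂ := by rw [hε₂_def]; linarith [hql'.2, hqr'.1]
  obtain ⟨K₂, hK₂_def⟩ : ∃ k : ℝ, k = cl * ρl + cr * ρr := ⟨_, rfl⟩
  have hK₂ : 0 < K₂ := by rw [hK₂_def]; positivity
  obtain ⟨b, hb_def⟩ : ∃ b : ℝ, b = max (max ρl ρr) (2 * K₂ / ε₂) := ⟨_, rfl⟩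
  have hbρl : ρl ≤ b := by rw [hb_def]; exact le_trans (le_max_left _ _) (le_max_left _ _)
  have hbρr : ρr ≤ b := by rw [hb_def]; exact le_trans (le_max_right _ _) (le_max_left _ _)
  have hb0 : 0 < b := lt_of_lt_of_le hρl hbρl
  have hbK : 2 * K₂ / ε₂ ≤ b := by rw [hb_def]; exact le_max_right _ _
  have hDb : D b < 0 := by
    have h1 : dSlope α δ p ρl ql b ≤ ql / ρl - cl * (1 - ρl / b) := by
      rw [hcl_def]; exact dSlope_upper (p := p) (q₀ := ql) hα hp hρl hδ2 hbρl
    have h2 : dSlope α δ p ρr (-qr) b ≤ -(qr / ρr) - cr * (1 - ρr / b) := by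
      have := dSlope_upper (p := p) (q₀ := -qr) hα hp hρr hδ2 hbρr
      rw [hcr_def]
      have e3 : -qr / ρr = -(qr / ρr) := by ring
      linarith [e3 ▸ this]
    have e1 : cl * (1 - ρl / b) = cl - cl * ρl / b := by ring
    have e2 : cr * (1 - ρr / b) = cr - cr * ρr / b := by ring
    have hdist : cl * ρl / b + cr * ρr / b = K₂ / b := by rw [hK₂_def]; ring
    have hKb : K₂ / b ≤ ε₂ / 2 := by
      rw [div_le_iff₀ hb0]
      have h4 : 2 * K₂ ≤ b * ε₂ := by
        have := (div_le_iff₀ hε₂).1 hbK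
        linarith
      nlinarith [h4]
    rw [hDx b]
    rw [e1] at h1
    rw [e2] at h2
    linarith [h1, h2, hdist, hKb, hε₂, hε₂_def]
  -- IVT
  have hab : a ≤ b := le_trans haρl hbρl
  have hsub : Icc a b ⊆ Ioi 0 := fun x hx => lt_of_lt_of_le ha0 hx.1
  obtain ⟨ρ, hρmem, hDρ⟩ :=
    intermediate_value_Icc' hab (hDcont.mono hsub) ⟨hDb.le, hDa.le⟩
  have hρ0 : 0 < ρ := lt_of_lt_of_le ha0 hρmem.1
  -- the equivalence between the Lax-curve equation and D = 0
  have hiff : ∀ x : ℝ, 0 < x →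
      (laxL p (fun s => α * s ^ δ) ρl ql x = laxR p (fun s => α * s ^ δ) ρr qr x
        ↔ D x = 0) := by
    intro x hx
    rw [laxR_eq_neg_laxL, laxL_eq_dSlope (q₀ := ql) hx, laxL_eq_dSlope (q₀ := -qr) hx,
      hDx x]
    constructor
    · intro h
      have h' : x * (dSlope α δ p ρl ql x + dSlope α δ p ρr (-qr) x) = 0 := by
        linear_combination h
      exact (mul_eq_zero.mp h').resolve_left (ne_of_gt hx)
    · intro h
      linear_combination x * h
  refine ⟨ρ, ⟨hρ0, (hiff ρ hρ0).2 hDρ⟩, ?_⟩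
  rintro y ⟨hy0, hyeq⟩
  have hDy : D y = 0 := (hiff y hy0).1 hyeq
  exact hDanti.injOn (mem_Ioi.2 hy0) (mem_Ioi.2 hρ0) (by rw [hDy, hDρ])
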